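/- Let s be a natural number with s ≥ 1, let C > 0, and let E, D : ℝ → ℝ be such that E is differentiable on ℝ, E t ≥ 0 and D t ≥ 0 for all t ≥ 0. Assume the differential inequality (1/2) · deriv E t + D t ≤ C · (1 + (E t)^(s/2)) · Real.sqrt (E t) · D t holds for all t ≥ 0 (with (E t)^(s/2) the real power), and assume the smallness condition C · (1 + (E 0)^(s/2)) · Real.sqrt (E 0) ≤ 1/4. Then E t ≤ E 0 for all t ≥ 0. (This is the bootstrap/continuity argument by which Theorem 1.2 (global well-posedness for small data) is deduced from the global energy estimate (1/2) d𝔼/dt + 𝔻 ≤ C(1 + 𝔼^{s/2})𝔼^{1/2}𝔻 of Proposition 4.2.) -/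
import Mathlib


/-- Bootstrap argument for global well-posedness: if the energy `E` and dissipation `D`
satisfy `(1/2)E' + D ≤ C(1 + E^{s/2})√E · D` for `t ≥ 0` and the initial smallness
`C(1 + E(0)^{s/2})√(E 0) ≤ 1/4`, then `E t ≤ E 0` for all `t ≥ 0`. -/
theorem energy_bootstrap (s : ℕ) (hs : 1 ≤ s) (C : ℝ) (hC : 0 < C)
    (E D : ℝ → ℝ) (hE : Differentiable ℝ E)
    (hEnn : ∀ t ≥ (0:ℝ), 0 ≤ E t) (hDnn : ∀ t ≥ (0:ℝ), 0 ≤ D t)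
    (hineq : ∀ t ≥ (0:ℝ),
      (1 / 2) * deriv E t + D t ≤
        C * (1 + (E t) ^ ((s : ℝ) / 2)) * Real.sqrt (E t) * D t)
    (hsmall : C * (1 + (E 0) ^ ((s : ℝ) / 2)) * Real.sqrt (E 0) ≤ 1 / 4) :
    ∀ t ≥ (0:ℝ), E t ≤ E 0 := by
  intro t ht
  by_contra hlt
  push_neg at hlt
  set h : ℝ → ℝ := fun x => C * (1 + x ^ ((s : ℝ) / 2)) * Real.sqrt x with hh
  have hE0 : 0 ≤ E 0 := hEnn 0 le_rfl
  have hsexp : (0:ℝ) < (s : ℝ) / 2 := by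
    have : (1:ℝ) ≤ (s:ℝ) := by exact_mod_cast hs
    linarith
  have hcont : ContinuousAt h (E 0) := by
    apply ContinuousAt.mul
    · exact continuousAt_const.mul
        (continuousAt_const.add (Real.continuousAt_rpow_const _ _ (Or.inr hsexp.le)))
    · exact Real.continuous_sqrt.continuousAt
  have h14 : h (E 0) ≤ 1 / 4 := hsmall
  have hev : ∀ᶠ x in nhds (E 0), h x < 1 / 2 :=
    hcont.eventually_lt_const (by linarith)
  rw [Metric.eventually_nhds_iff] at hev
  obtain ⟨ε, hε, hball⟩ := hev
  set M : ℝ := min (E 0 + ε / 2) ((E 0 + E t) / 2) with hM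
  have hM0 : E 0 < M := by
    apply lt_min <;> linarith
  have hMt : M < E t := by
    calc M ≤ (E 0 + E t) / 2 := min_le_right _ _
    _ < E t := by linarith
  have hMnn : 0 ≤ M := hE0.trans hM0.le
  have hhM : h M < 1 / 2 := by
    apply hball
    have h1 : M ≤ E 0 + ε / 2 := min_le_left _ _
    rw [Real.dist_eq, abs_lt]
    constructor <;> linarith
  have hmono : ∀ x, 0 ≤ x → x ≤ M → h x ≤ h M := by
    intro x hx hxM
    have h1 : x ^ ((s : ℝ) / 2) ≤ M ^ ((s : ℝ) / 2) :=
      Real.rpow_le_rpow hx hxM hsexp.le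
    have h2 : Real.sqrt x ≤ Real.sqrt M := Real.sqrt_le_sqrt hxM
    have h3 : (0:ℝ) ≤ 1 + x ^ ((s : ℝ) / 2) := by positivity
    have h4 : (0:ℝ) ≤ Real.sqrt x := Real.sqrt_nonneg _
    simp only [hh]
    have h5 : C * (1 + x ^ ((s : ℝ) / 2)) ≤ C * (1 + M ^ ((s : ℝ) / 2)) :=
      mul_le_mul_of_nonneg_left (by linarith) hC.le
    exact mul_le_mul h5 h2 h4 (by positivity)
  set B : Set ℝ := {τ ∈ Set.Icc (0:ℝ) t | M ≤ E τ} with hB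
  have htB : t ∈ B := ⟨⟨ht, le_rfl⟩, hMt.le⟩
  have hBclosed : IsClosed B :=
    (isClosed_Icc).inter (isClosed_le continuous_const hE.continuous)
  have hbdd : BddBelow B := ⟨0, fun x hx => hx.1.1⟩
  set T : ℝ := sInf B with hT
  have hTB : T ∈ B := hBclosed.csInf_mem ⟨t, htB⟩ hbdd
  have hT0 : 0 ≤ T := hTB.1.1
  have hTt : T ≤ t := hTB.1.2
  have hMT : M ≤ E T := hTB.2
  have key : ∀ τ ∈ interior (Set.Icc (0:ℝ) T), deriv E τ ≤ 0 := by
    rw [interior_Icc]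
    intro τ hτ
    have hτ0 : 0 ≤ τ := hτ.1.le
    have hτnB : τ ∉ B := notMem_of_lt_csInf hτ.2 hbdd
    have hEτM : E τ ≤ M := by
      by_contra hc
      exact hτnB ⟨⟨hτ0, hτ.2.le.trans hTt⟩, (not_le.mp hc).le⟩
    have hEτ : 0 ≤ E τ := hEnn τ hτ0
    have hhτ : h (E τ) ≤ 1 / 2 := (hmono _ hEτ hEτM).trans hhM.le
    have h1 := hineq τ hτ0
    have h2 := hDnn τ hτ0
    have h3 : C * (1 + (E τ) ^ ((s : ℝ) / 2)) * Real.sqrt (E τ) = h (E τ) := rfl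
    rw [h3] at h1
    nlinarith
  have hanti : AntitoneOn E (Set.Icc (0:ℝ) T) :=
    antitoneOn_of_deriv_nonpos (convex_Icc 0 T) hE.continuous.continuousOn
      (fun x _ => (hE x).differentiableWithinAt) key
  have : E T ≤ E 0 := hanti ⟨le_rfl, hT0⟩ ⟨hT0, le_rfl⟩ hT0
  linarith
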